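/- Lower bound on energy-not-served via the energy gap at a single power level: let P^r be a reference with E-p transform E_{P^r}, and let Ω be a capacity curve. Suppose g is any output signal with g(t) ≤ P^r(t) pointwise and E_g(p) ≤ Ω(p) for all p ≥ 0 (feasibility). Then for every p* ≥ 0, Γ(g, P^r) = E_{P^r}(0) − E_g(0) ≥ E_{P^r}(p*) − Ω(p*). -/

import Mathlib

open MeasureTheory Set

lemma int_max_aux (f : ℝ → ℝ) (hmeas : Measurable f) (hnonneg : ∀ t, 0 ≤ f t)
    (hint : IntegrableOn f (Set.Ioi 0)) (p : ℝ) (hp : 0 ≤ p) :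
    IntegrableOn (fun t => max (f t - p) 0) (Set.Ioi 0) := by
  apply Integrable.mono hint ((hmeas.sub measurable_const).max measurable_const).aestronglyMeasurable
  filter_upwards with t
  rw [Real.norm_eq_abs, Real.norm_eq_abs, abs_of_nonneg (le_max_right _ _),
    abs_of_nonneg (hnonneg t)]
  exact max_le (by show f t - p ≤ f t; linarith [hnonneg t]) (hnonneg t)

/-- Lower bound on energy-not-served via the energy gap at a single power
level: if `g ≤ Pʳ` pointwise and `E_g(p) ≤ Ω(p)` for all `p ≥ 0`, then
`Γ(g, Pʳ) = E_{Pʳ}(0) − E_g(0) ≥ E_{Pʳ}(p*) − Ω(p*)` for every `p* ≥ 0`. -/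
theorem ens_lower_bound_energy_gap (Pr g Ω : ℝ → ℝ)
    (hPmeas : Measurable Pr) (hgmeas : Measurable g)
    (hPnonneg : ∀ t, 0 ≤ Pr t) (hgnonneg : ∀ t, 0 ≤ g t)
    (hle : ∀ t, g t ≤ Pr t)
    (hPint : IntegrableOn Pr (Set.Ioi 0)) (hgint : IntegrableOn g (Set.Ioi 0))
    (hfeas : ∀ p : ℝ, 0 ≤ p →
      (∫ t in Set.Ioi (0 : ℝ), max (g t - p) 0) ≤ Ω p) :
    (∫ t in Set.Ioi (0 : ℝ), (Pr t - g t))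
      = (∫ t in Set.Ioi (0 : ℝ), max (Pr t - 0) 0)
        - (∫ t in Set.Ioi (0 : ℝ), max (g t - 0) 0) ∧
    ∀ pstar : ℝ, 0 ≤ pstar →
      (∫ t in Set.Ioi (0 : ℝ), max (Pr t - pstar) 0) - Ω pstar
        ≤ ∫ t in Set.Ioi (0 : ℝ), (Pr t - g t) := by
  constructor
  · rw [integral_sub hPint hgint]
    congr 1
    · exact setIntegral_congr_fun measurableSet_Ioi fun t _ => by
        rw [sub_zero, max_eq_left (hPnonneg t)]
    · exact setIntegral_congr_fun measurableSet_Ioi fun t _ => by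
        rw [sub_zero, max_eq_left (hgnonneg t)]
  · intro p hp
    have hΩ := hfeas p hp
    have hPm := int_max_aux Pr hPmeas hPnonneg hPint p hp
    have hgm := int_max_aux g hgmeas hgnonneg hgint p hp
    have key : (∫ t in Set.Ioi (0 : ℝ), max (Pr t - p) 0)
        - (∫ t in Set.Ioi (0 : ℝ), max (g t - p) 0)
        ≤ ∫ t in Set.Ioi (0 : ℝ), (Pr t - g t) := by
      rw [← integral_sub hPm hgm]
      apply setIntegral_mono_on (hPm.sub hgm) (hPint.sub hgint) measurableSet_Ioi
      intro t _
      have h1 := hle t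
      have h2 := hgnonneg t
      simp only [Pi.sub_apply]
      rcases max_cases (Pr t - p) 0 with ⟨e1, i1⟩ | ⟨e1, i1⟩ <;>
        rcases max_cases (g t - p) 0 with ⟨e2, i2⟩ | ⟨e2, i2⟩ <;>
        rw [e1, e2] <;> linarith
    linarith
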